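/- Let K be a field of characteristic not 2, and let V = K^m with the bilinear form <x,y> = sum_k a_k x_k y_k where all a_k are nonzero. If v_1,...,v_n and w_1,...,w_n are vectors in V with <v_i,v_j> = <w_i,w_j> for all i,j, and if, with r = min(n,m), some r-by-r minor of the Gram matrix (<v_i,v_j>)_{i,j=1..n} is nonzero, then there exists an orthogonal transformation g of V (i.e., a linear map preserving the form) with w_i = g(v_i) for all i. -/

import Mathlib

open LinearMap (BilinForm)
open Module

section WittAux

universe uu vv

variable {K : Type uu} [Field K]

lemma exists_reflection {V : Type vv} [AddCommGroup V] [Module K V] (B : BilinForm K V) (hs : B.IsSymm) {z : V} (hz : B z z ≠ 0) :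
    ∃ τ : V ≃ₗ[K] V, (∀ x y, B (τ x) (τ y) = B x y) ∧
      ∀ x, τ x = x - ((2 / B z z) * B x z) • z := by
  set c := B z z with hc
  set f : V →ₗ[K] V := LinearMap.id - LinearMap.smulRight ((2 / c) • B.flip z) z with hf
  have hfapp : ∀ x, f x = x - ((2 / c) * B x z) • z := by
    intro x
    simp [hf, LinearMap.sub_apply, LinearMap.smulRight_apply, LinearMap.smul_apply]
  have hBz : ∀ x, B (f x) z = - B x z := by
    intro x
    rw [hfapp]
    simp only [map_sub, map_smul, LinearMap.sub_apply, LinearMap.smul_apply, smul_eq_mul]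
    field_simp
    ring
  have hinv : Function.Involutive f := by
    intro x
    rw [hfapp (f x), hBz, hfapp x]
    module
  refine ⟨LinearEquiv.ofInvolutive f hinv, ?_, ?_⟩
  · intro x y
    rw [LinearEquiv.coe_ofInvolutive, hfapp, hfapp]
    have hsym : B z y = B y z := by simpa using (hs.eq z y)
    simp only [map_sub, map_smul, LinearMap.sub_apply, LinearMap.smul_apply, smul_eq_mul]
    rw [hsym]
    field_simp
    ring
  · intro x; rw [LinearEquiv.coe_ofInvolutive, hfapp]


lemma exists_isometry_map_eq {V : Type vv} [AddCommGroup V] [Module K V] (h2 : (2:K) ≠ 0) (B : BilinForm K V) (hs : B.IsSymm)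
    {u u' : V} (huu : B u u = B u' u') (hu : B u u ≠ 0) :
    ∃ g : V ≃ₗ[K] V, (∀ x y, B (g x) (g y) = B x y) ∧ g u = u' := by
  have hsym : ∀ x y : V, B x y = B y x := fun x y => by simpa using (hs.eq x y)
  have key : ∀ z w : V, B z z ≠ 0 → B w z = B z z / 2 →
      ∃ g : V ≃ₗ[K] V, (∀ x y, B (g x) (g y) = B x y) ∧ g w = w - z := by
    intro z w hz hwz
    obtain ⟨τ, hτ1, hτ2⟩ := exists_reflection B hs hz
    refine ⟨τ, hτ1, ?_⟩
    rw [hτ2, hwz]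
    have hco : 2 / B z z * (B z z / 2) = 1 := by field_simp
    rw [hco, one_smul]
  by_cases hd : B (u - u') (u - u') = 0
  · -- use z = u + u'
    set p := B u u' with hp
    have e1 : B (u + u') (u + u') = 2 * (B u u + p) := by
      simp only [map_add, LinearMap.add_apply, hsym u' u, ← huu, hp]; ring
    have hz : B (u + u') (u + u') ≠ 0 := by
      have e2 : B (u - u') (u - u') = 2 * (B u u - p) := by
        simp only [map_sub, LinearMap.sub_apply, hsym u' u, ← huu, hp]; ring
      rw [e2] at hd
      have hpc : p = B u u := by
        have h := (mul_eq_zero.mp hd).resolve_left h2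
        exact (sub_eq_zero.mp h).symm
      rw [e1, hpc]
      exact mul_ne_zero h2 (by rw [← two_mul]; exact mul_ne_zero h2 hu)
    have hwz : B u (u + u') = B (u + u') (u + u') / 2 := by
      rw [e1, mul_div_cancel_left₀ _ h2]
      simp only [map_add, LinearMap.add_apply, hp]
    obtain ⟨g1, hg1, hg1u⟩ := key (u + u') u hz hwz
    have hg1u' : g1 u = -u' := by rw [hg1u]; abel
    have hu' : B u' u' ≠ 0 := by rwa [← huu]
    obtain ⟨τ, hτ1, hτ2⟩ := exists_reflection B hs hu'
    have hτu : τ (-u') = u' := by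
      rw [hτ2]
      have hco : 2 / B u' u' * B (-u') u' = -2 := by
        rw [map_neg, LinearMap.neg_apply, mul_neg]
        field_simp
      rw [hco]
      module
    exact ⟨g1.trans τ, fun x y => by rw [LinearEquiv.trans_apply, LinearEquiv.trans_apply,
      hτ1, hg1], by rw [LinearEquiv.trans_apply, hg1u', hτu]⟩
  · have hwz : B u (u - u') = B (u - u') (u - u') / 2 := by
      have e2 : B (u - u') (u - u') = 2 * (B u u - B u u') := by
        simp only [map_sub, LinearMap.sub_apply, hsym u' u, ← huu]; ring
      rw [e2, mul_div_cancel_left₀ _ h2]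
      simp only [map_sub, LinearMap.sub_apply]
    obtain ⟨g, hg, hgu⟩ := key (u - u') u hd hwz
    exact ⟨g, hg, by rw [hgu]; abel⟩


lemma extend_from_orthogonal {V : Type vv} [AddCommGroup V] [Module K V] (B : BilinForm K V) (hs : B.IsSymm) {x : V} (hx : B x x ≠ 0)
    (φ : (B.orthogonal (K ∙ x)) ≃ₗ[K] (B.orthogonal (K ∙ x)))
    (hφ : ∀ z z' : B.orthogonal (K ∙ x), B (φ z) (φ z') = B (z : V) (z' : V)) :
    ∃ H : V ≃ₗ[K] V, (∀ u u', B (H u) (H u') = B u u') ∧ H x = x ∧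
      ∀ z : B.orthogonal (K ∙ x), H (z : V) = φ z := by
  have hsym : ∀ a b : V, B a b = B b a := fun a b => by simpa using (hs.eq a b)
  have hcompl : IsCompl (K ∙ x) (B.orthogonal (K ∙ x)) :=
    LinearMap.BilinForm.isCompl_span_singleton_orthogonal hx
  let e := Submodule.prodEquivOfIsCompl (K ∙ x) (B.orthogonal (K ∙ x)) hcompl
  let H := e.symm ≪≫ₗ ((LinearEquiv.refl K (K ∙ x)).prodCongr φ) ≪≫ₗ e
  have key : ∀ (a : K ∙ x) (b : B.orthogonal (K ∙ x)),
      H ((a : V) + (b : V)) = (a : V) + ((φ b : B.orthogonal (K ∙ x)) : V) := by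
    intro a b
    have h1 : e.symm ((a : V) + (b : V)) = (a, b) := by
      apply e.injective
      rw [e.apply_symm_apply]
      rfl
    show e ((((LinearEquiv.refl K (K ∙ x)).prodCongr φ)) (e.symm ((a : V) + (b : V)))) = _
    rw [h1]
    rfl
  have horthF : ∀ (a : K ∙ x) (b : B.orthogonal (K ∙ x)), B (a : V) (b : V) = 0 := by
    intro a b
    exact (LinearMap.BilinForm.mem_orthogonal_iff.mp b.2) a a.2
  have hdecomp : ∀ u : V, u = ((e.symm u).1 : V) + ((e.symm u).2 : V) := by
    intro u
    conv_lhs => rw [← e.apply_symm_apply u]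
    rfl
  refine ⟨H, ?_, ?_, ?_⟩
  · intro u u'
    have hu : u = ((e.symm u).1 : V) + ((e.symm u).2 : V) := hdecomp u
    have hu' : u' = ((e.symm u').1 : V) + ((e.symm u').2 : V) := hdecomp u'
    rw [hu, hu', key, key]
    have c1 : B ((e.symm u).1 : V) ((φ (e.symm u').2 : _) : V) = 0 := horthF _ _
    have c2 : B ((φ (e.symm u).2 : _) : V) ((e.symm u').1 : V) = 0 := by
      rw [hsym]; exact horthF _ _
    have c3 : B ((φ (e.symm u).2 : _) : V) ((φ (e.symm u').2 : _) : V)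
        = B ((e.symm u).2 : V) ((e.symm u').2 : V) := hφ _ _
    have c4 : B ((e.symm u).1 : V) ((e.symm u').2 : V) = 0 := horthF _ _
    have c5 : B ((e.symm u).2 : V) ((e.symm u').1 : V) = 0 := by
      rw [hsym]; exact horthF _ _
    simp only [map_add, LinearMap.add_apply, c1, c2, c3, c4, c5]
  · have hxW : x ∈ (K ∙ x) := Submodule.mem_span_singleton_self x
    have := key ⟨x, hxW⟩ 0
    simpa using this
  · intro z
    have := key 0 z
    simpa using this


lemma witt_core (h2 : (2:K) ≠ 0) :
    ∀ (r : ℕ) (V : Type vv) (_ : AddCommGroup V) (_ : @Module K V _ _)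
      (B : BilinForm K V) (_ : B.IsSymm) (_ : B.Nondegenerate)
      (v w : Fin r → V) (_ : ∀ i j, B (v i) (v j) = B (w i) (w j))
      (_ : ∀ i j, i ≠ j → B (v i) (v j) = 0) (_ : ∀ i, B (v i) (v i) ≠ 0),
      ∃ g : V ≃ₗ[K] V, (∀ x y, B (g x) (g y) = B x y) ∧ ∀ i, g (v i) = w i := by
  intro r
  induction r with
  | zero =>
    intro V _ _ B _ _ v w _ _ _
    exact ⟨LinearEquiv.refl K V, fun x y => rfl, fun i => i.elim0⟩
  | succ r ih =>
    intro V _ _ B hs hnd v w hG horth hani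
    obtain ⟨g1, hg1, hg1v0⟩ := exists_isometry_map_eq h2 B hs (hG 0 0) (hani 0)
    have hw0 : B (w 0) (w 0) ≠ 0 := by rw [← hG 0 0]; exact hani 0
    set F := B.orthogonal (K ∙ (w 0)) with hF
    have hrefl : B.IsRefl := hs.isRefl
    have hndF : (B.restrict F).Nondegenerate :=
      LinearMap.BilinForm.restrict_nondegenerate_orthogonal_spanSingleton B hnd hrefl hw0
    have hsF : (B.restrict F).IsSymm := by
      constructor
      intro z z'
      simpa using hs.eq (z : V) (z' : V)
    have hmemv : ∀ i : Fin r, g1 (v i.succ) ∈ F := by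
      intro i
      rw [hF, LinearMap.BilinForm.mem_orthogonal_iff]
      intro n hn
      obtain ⟨c, rfl⟩ := Submodule.mem_span_singleton.mp hn
      have : B (w 0) (g1 (v i.succ)) = 0 := by
        rw [← hg1v0, hg1]
        exact horth 0 i.succ (Fin.succ_ne_zero i).symm
      simp [LinearMap.BilinForm.IsOrtho, this]
    have hmemw : ∀ i : Fin r, w i.succ ∈ F := by
      intro i
      rw [hF, LinearMap.BilinForm.mem_orthogonal_iff]
      intro n hn
      obtain ⟨c, rfl⟩ := Submodule.mem_span_singleton.mp hn
      have : B (w 0) (w i.succ) = 0 := by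
        rw [← hG 0 i.succ]
        exact horth 0 i.succ (Fin.succ_ne_zero i).symm
      simp [LinearMap.BilinForm.IsOrtho, this]
    set vt : Fin r → F := fun i => ⟨g1 (v i.succ), hmemv i⟩ with hvt
    set wt : Fin r → F := fun i => ⟨w i.succ, hmemw i⟩ with hwt
    have hGt : ∀ i j, (B.restrict F) (vt i) (vt j) = (B.restrict F) (wt i) (wt j) := by
      intro i j
      simp only [LinearMap.BilinForm.restrict_apply, LinearMap.domRestrict_apply, hvt, hwt]
      rw [hg1]
      exact hG i.succ j.succ
    have hortht : ∀ i j, i ≠ j → (B.restrict F) (vt i) (vt j) = 0 := by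
      intro i j hij
      simp only [LinearMap.BilinForm.restrict_apply, LinearMap.domRestrict_apply, hvt]
      rw [hg1]
      exact horth i.succ j.succ (fun hc => hij (Fin.succ_injective r hc))
    have hanit : ∀ i, (B.restrict F) (vt i) (vt i) ≠ 0 := by
      intro i
      simp only [LinearMap.BilinForm.restrict_apply, LinearMap.domRestrict_apply, hvt]
      rw [hg1]
      exact hani i.succ
    obtain ⟨φ, hφ, hφv⟩ := ih F _ _ (B.restrict F) hsF hndF vt wt hGt hortht hanit
    obtain ⟨H, hH, hHw0, hHF⟩ := extend_from_orthogonal B hs hw0 φ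
      (fun z z' => by simpa only [LinearMap.BilinForm.restrict_apply, LinearMap.domRestrict_apply] using hφ z z')
    refine ⟨g1.trans H, fun x y => by
      rw [LinearEquiv.trans_apply, LinearEquiv.trans_apply, hH, hg1], ?_⟩
    intro i
    induction i using Fin.cases with
    | zero => rw [LinearEquiv.trans_apply, hg1v0, hHw0]
    | succ i =>
      rw [LinearEquiv.trans_apply]
      have : g1 (v i.succ) = ((vt i : F) : V) := rfl
      rw [this, hHF (vt i), hφv i]


lemma bilin_sum_left' {V : Type vv} [AddCommGroup V] [Module K V] (B : BilinForm K V)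
    {r : ℕ} (c : Fin r → K) (x : Fin r → V) (y : V) :
    B (∑ i, c i • x i) y = ∑ i, c i * B (x i) y := by
  simp [map_sum, LinearMap.sum_apply, map_smul, LinearMap.smul_apply, smul_eq_mul]


lemma gram_li {V : Type vv} [AddCommGroup V] [Module K V] (B : BilinForm K V)
    {r : ℕ} (x : Fin r → V)
    (hdet : (Matrix.of fun i j => B (x i) (x j)).det ≠ 0) :
    LinearIndependent K x := by
  rw [Fintype.linearIndependent_iff]
  intro c hc
  have hrel : ∀ j, ∑ i, c i * B (x i) (x j) = 0 := by
    intro j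
    rw [← bilin_sum_left' B c x (x j), hc]
    simp
  have hvm : Matrix.vecMul c (Matrix.of fun i j => B (x i) (x j)) = 0 := by
    funext j
    simpa [Matrix.vecMul, dotProduct] using hrel j
  have hGu : IsUnit (Matrix.of fun i j => B (x i) (x j)).det := isUnit_iff_ne_zero.mpr hdet
  have : c = 0 := by
    calc c = Matrix.vecMul c ((Matrix.of fun i j => B (x i) (x j)) *
        (Matrix.of fun i j => B (x i) (x j))⁻¹) := by
          rw [Matrix.mul_nonsing_inv _ hGu, Matrix.vecMul_one]
    _ = Matrix.vecMul (Matrix.vecMul c (Matrix.of fun i j => B (x i) (x j)))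
        (Matrix.of fun i j => B (x i) (x j))⁻¹ := by rw [Matrix.vecMul_vecMul]
    _ = 0 := by rw [hvm, Matrix.zero_vecMul]
  exact fun i => congrFun this i


lemma witt_general {V : Type vv} [AddCommGroup V] [Module K V] [FiniteDimensional K V]
    (h2 : (2:K) ≠ 0) (B : BilinForm K V) (hs : B.IsSymm) (hnd : B.Nondegenerate)
    {r : ℕ} (v w : Fin r → V) (hG : ∀ i j, B (v i) (v j) = B (w i) (w j))
    (hdet : (Matrix.of fun i j => B (v i) (v j)).det ≠ 0) :
    ∃ g : V ≃ₗ[K] V, (∀ x y, B (g x) (g y) = B x y) ∧ ∀ i, g (v i) = w i := by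
  classical
  set G : Matrix (Fin r) (Fin r) K := Matrix.of fun i j => B (v i) (v j) with hGdef
  -- expansion helpers
  have hexp : ∀ (c : Fin r → K) (x : V), B (∑ i, c i • v i) x = ∑ i, c i * B (v i) x := by
    intro c x
    simp [map_sum, LinearMap.sum_apply, map_smul, LinearMap.smul_apply, smul_eq_mul]
  have hexp2 : ∀ (c d : Fin r → K) (x y : Fin r → V),
      B (∑ i, c i • x i) (∑ j, d j • y j) = ∑ i, ∑ j, c i * d j * B (x i) (y j) := by
    intro c d x y
    simp only [map_sum, map_smul, LinearMap.sum_apply, LinearMap.smul_apply, smul_eq_mul,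
      Finset.mul_sum]
    rw [Finset.sum_comm]
    exact Finset.sum_congr rfl fun i _ => Finset.sum_congr rfl fun j _ => by ring
  -- coefficient vanishing
  have hrel : ∀ c : Fin r → K, (∀ j, ∑ i, c i * B (v i) (v j) = 0) → c = 0 := by
    intro c hc
    have hvm : Matrix.vecMul c G = 0 := by
      funext j
      simpa [Matrix.vecMul, dotProduct, hGdef] using hc j
    have hGu : IsUnit G.det := isUnit_iff_ne_zero.mpr hdet
    calc c = Matrix.vecMul c (G * G⁻¹) := by rw [Matrix.mul_nonsing_inv _ hGu, Matrix.vecMul_one]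
    _ = Matrix.vecMul (Matrix.vecMul c G) G⁻¹ := by rw [Matrix.vecMul_vecMul]
    _ = 0 := by rw [hvm, Matrix.zero_vecMul]
  have hli : LinearIndependent K v := by
    rw [Fintype.linearIndependent_iff]
    intro c hc
    have : ∀ j, ∑ i, c i * B (v i) (v j) = 0 := by
      intro j
      rw [← hexp c (v j), hc]
      simp
    exact fun i => congrFun (hrel c this) i
  set U := Submodule.span K (Set.range v) with hU
  have hmemU : ∀ i, v i ∈ U := fun i => Submodule.subset_span ⟨i, rfl⟩
  let b₀ : Basis (Fin r) K U := Basis.span hli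
  have hb₀ : ∀ i, (b₀ i : V) = v i := fun i => congrArg Subtype.val (Basis.span_apply hli i)
  have hcoe : ∀ x : U, (x : V) = ∑ i, b₀.repr x i • v i := by
    intro x
    conv_lhs => rw [← b₀.sum_repr x]
    push_cast
    exact Finset.sum_congr rfl fun i _ => by rw [hb₀]
  have hsU : (B.restrict U).IsSymm := ⟨fun x y => by simpa using hs.eq (x : V) (y : V)⟩
  have hndU : (B.restrict U).Nondegenerate := by
    refine (LinearMap.IsRefl.nondegenerate_iff_separatingLeft hsU.isRefl).mpr ?_
    intro x hx
    have hc : ∀ j, ∑ i, b₀.repr x i * B (v i) (v j) = 0 := by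
      intro j
      have := hx ⟨v j, hmemU j⟩
      rw [LinearMap.BilinForm.restrict_apply, LinearMap.domRestrict_apply] at this
      rw [← hexp, ← hcoe]
      exact this
    have h0 := hrel _ hc
    ext
    rw [hcoe x]
    simp [congrFun h0]
  -- orthogonal basis of U
  haveI : Invertible (2:K) := invertibleOfNonzero h2
  obtain ⟨b1, hb1⟩ := LinearMap.BilinForm.exists_orthogonal_basis (LinearMap.BilinForm.isSymm_iff.mp hsU)
  have hrank : finrank K U = r := by
    rw [hU, finrank_span_eq_card hli, Fintype.card_fin]
  let b : Basis (Fin r) K U := b1.reindex (finCongr hrank)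
  have hborth : ∀ i j : Fin r, i ≠ j → B ((b i : U) : V) ((b j : U) : V) = 0 := by
    intro i j hij
    have := hb1 (i := (finCongr hrank).symm i) (j := (finCongr hrank).symm j)
      (fun hc => hij (by simpa using congrArg (finCongr hrank) hc))
    simpa [b, Basis.reindex_apply, LinearMap.BilinForm.restrict_apply,
      LinearMap.domRestrict_apply] using this
  have hbani : ∀ i : Fin r, B ((b i : U) : V) ((b i : U) : V) ≠ 0 := by
    intro i
    have horthb : (B.restrict U).iIsOrtho b := by
      intro i j hij
      have := hb1 (i := (finCongr hrank).symm i) (j := (finCongr hrank).symm j)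
        (fun hc => hij (by simpa using congrArg (finCongr hrank) hc))
      simpa [b, Basis.reindex_apply, Function.onFun] using this
    have := horthb.not_isOrtho_basis_self_of_nondegenerate hndU i
    simpa [LinearMap.BilinForm.IsOrtho, LinearMap.BilinForm.restrict_apply,
      LinearMap.domRestrict_apply] using this
  -- base change matrices
  set C : Fin r → Fin r → K := fun j i => b₀.repr (b j) i with hC
  set v' : Fin r → V := fun j => ((b j : U) : V) with hv'
  set w' : Fin r → V := fun j => ∑ i, C j i • w i with hw'
  have hbv : ∀ j, v' j = ∑ i, C j i • v i := fun j => hcoe (b j)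
  have hG' : ∀ j k, B (v' j) (v' k) = B (w' j) (w' k) := by
    intro j k
    rw [hbv, hbv, hw', hexp2, hexp2]
    exact Finset.sum_congr rfl fun i _ => Finset.sum_congr rfl fun l _ => by rw [hG]
  obtain ⟨g, hgiso, hgv'⟩ := witt_core h2 r V _ _ B hs hnd v' w' hG'
    (fun i j hij => hborth i j hij) (fun i => hbani i)
  -- recover
  set D : Fin r → Fin r → K := fun i j => b.repr ⟨v i, hmemU i⟩ j with hD
  have hvD : ∀ i, v i = ∑ j, D i j • v' j := by
    intro i
    have := b.sum_repr ⟨v i, hmemU i⟩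
    have h2' := congrArg (Submodule.subtype U) this
    simp only [map_sum, map_smul, Submodule.subtype_apply] at h2'
    simpa [hD, hv'] using h2'.symm
  have hDC : ∀ i k, (∑ j, D i j * C j k) = if k = i then 1 else 0 := by
    intro i k
    have e1 : v i = ∑ k, (∑ j, D i j * C j k) • v k := by
      conv_lhs => rw [hvD i]
      calc ∑ j, D i j • v' j = ∑ j, ∑ k, (D i j * C j k) • v k := by
            refine Finset.sum_congr rfl fun j _ => ?_
            rw [hbv, Finset.smul_sum]
            exact Finset.sum_congr rfl fun k _ => by rw [smul_smul]
      _ = ∑ k, ∑ j, (D i j * C j k) • v k := Finset.sum_comm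
      _ = ∑ k, (∑ j, D i j * C j k) • v k := by
            exact Finset.sum_congr rfl fun k _ => (Finset.sum_smul).symm
    have e2 : ∑ k, ((∑ j, D i j * C j k) - if k = i then 1 else 0) • v k = 0 := by
      simp only [sub_smul, Finset.sum_sub_distrib, ← e1, ite_smul, one_smul, zero_smul]
      simp
    have := Fintype.linearIndependent_iff.mp hli _ e2 k
    exact sub_eq_zero.mp this
  refine ⟨g, hgiso, ?_⟩
  intro i
  rw [hvD i, map_sum]
  calc ∑ j, g (D i j • v' j) = ∑ j, D i j • w' j := by
        refine Finset.sum_congr rfl fun j _ => ?_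
        rw [map_smul, hgv']
  _ = ∑ k, (∑ j, D i j * C j k) • w k := by
        calc ∑ j, D i j • w' j = ∑ j, ∑ k, (D i j * C j k) • w k := by
              refine Finset.sum_congr rfl fun j _ => ?_
              rw [hw', Finset.smul_sum]
              exact Finset.sum_congr rfl fun k _ => by rw [smul_smul]
        _ = ∑ k, ∑ j, (D i j * C j k) • w k := Finset.sum_comm
        _ = ∑ k, (∑ j, D i j * C j k) • w k := by
              exact Finset.sum_congr rfl fun k _ => (Finset.sum_smul).symm
  _ = w i := by
        simp only [hDC, ite_smul, one_smul, zero_smul]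
        simp


end WittAux

theorem stmt2 {K : Type*} [Field K] (h2 : (2 : K) ≠ 0) {m n : ℕ}
    (a : Fin m → K) (ha : ∀ k, a k ≠ 0)
    (B : (Fin m → K) → (Fin m → K) → K)
    (hB : ∀ x y, B x y = ∑ k, a k * x k * y k)
    (v w : Fin n → Fin m → K)
    (hvw : ∀ i j, B (v i) (v j) = B (w i) (w j))
    (hminor : ∃ rows cols : Fin (min n m) → Fin n,
      (Matrix.of fun i j => B (v (rows i)) (v (cols j))).det ≠ 0) :
    ∃ g : (Fin m → K) ≃ₗ[K] (Fin m → K),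
      (∀ x y, B (g x) (g y) = B x y) ∧ ∀ i, w i = g (v i) := by
  classical
  obtain ⟨rows, cols, hdet⟩ := hminor
  -- package the bilinear form
  set B' : BilinForm K (Fin m → K) := LinearMap.mk₂ K (fun x y => ∑ k, a k * x k * y k)
    (fun x x' y => by simp [add_mul, mul_add, Finset.sum_add_distrib])
    (fun t x y => by
      simp only [smul_eq_mul, Pi.smul_apply, Finset.mul_sum]
      exact Finset.sum_congr rfl fun k _ => by ring)
    (fun x y y' => by simp [add_mul, mul_add, Finset.sum_add_distrib])
    (fun t x y => by
      simp only [smul_eq_mul, Pi.smul_apply, Finset.mul_sum]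
      exact Finset.sum_congr rfl fun k _ => by ring) with hB'def
  have hB'B : ∀ x y, B x y = B' x y := by
    intro x y
    rw [hB]
    simp [hB'def, LinearMap.mk₂_apply]
  have hs' : B'.IsSymm := by
    constructor
    intro x y
    simp only [hB'def, LinearMap.mk₂_apply, RingHom.id_apply]
    exact Finset.sum_congr rfl fun k _ => by ring
  have hnd' : B'.Nondegenerate := by
    refine (LinearMap.IsRefl.nondegenerate_iff_separatingLeft hs'.isRefl).mpr ?_
    intro x hx
    funext k
    have h5 := hx (Pi.single k 1)
    simp only [hB'def, LinearMap.mk₂_apply] at h5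
    rw [Finset.sum_eq_single k (fun l _ hl => by simp [Pi.single_apply, hl])
      (fun hk => absurd (Finset.mem_univ k) hk), Pi.single_eq_same, mul_one] at h5
    simpa using (mul_eq_zero.mp h5).resolve_left (ha k)
  -- trivial case m = 0
  rcases Nat.eq_zero_or_pos m with hm0 | hmpos
  · subst hm0
    refine ⟨LinearEquiv.refl K _, fun x y => rfl, fun i => ?_⟩
    funext k; exact k.elim0
  rcases le_total n m with hnm | hmn
  · -- CASE A : n ≤ m, the whole Gram matrix of v is invertible
    have hmin : min n m = n := min_eq_left hnm
    let e : Fin n ≃ Fin (min n m) := finCongr hmin.symm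
    let rows' : Fin n → Fin n := fun i => rows (e i)
    let cols' : Fin n → Fin n := fun i => cols (e i)
    have hdetB' : (Matrix.of fun (i : Fin (min n m)) (j : Fin (min n m)) =>
        B' (v (rows i)) (v (cols j))).det ≠ 0 := by
      have heq : (Matrix.of fun (i : Fin (min n m)) (j : Fin (min n m)) =>
          B' (v (rows i)) (v (cols j))) = (Matrix.of fun i j => B (v (rows i)) (v (cols j))) := by
        ext i j; rw [Matrix.of_apply, Matrix.of_apply, hB'B]
      rw [heq]; exact hdet
    have hdet' : (Matrix.of fun i j => B' (v (rows' i)) (v (cols' j))).det ≠ 0 := by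
      have heq : (Matrix.of fun i j => B' (v (rows' i)) (v (cols' j)))
          = (Matrix.of fun (i : Fin (min n m)) (j : Fin (min n m)) =>
            B' (v (rows i)) (v (cols j))).submatrix e e := rfl
      rw [heq, Matrix.det_submatrix_equiv_self]
      exact hdetB'
    have hrowinj : Function.Injective rows' := by
      intro i1 i2 h12
      by_contra hne
      exact hdet' (Matrix.det_zero_of_row_eq hne (funext fun j => by
        simp only [Matrix.of_apply, h12]))
    have hcolinj : Function.Injective cols' := by
      intro i1 i2 h12
      by_contra hne
      exact hdet' (Matrix.det_zero_of_column_eq hne (fun k => by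
        simp only [Matrix.of_apply, h12]))
    let er : Equiv.Perm (Fin n) := Equiv.ofBijective rows' (Finite.injective_iff_bijective.mp hrowinj)
    let ec : Equiv.Perm (Fin n) := Equiv.ofBijective cols' (Finite.injective_iff_bijective.mp hcolinj)
    set G : Matrix (Fin n) (Fin n) K := Matrix.of fun i j => B' (v i) (v j) with hGdef
    have hdetG : G.det ≠ 0 := by
      have hM : (Matrix.of fun i j => B' (v (rows' i)) (v (cols' j)))
          = (G.submatrix er er).submatrix id ⇑(ec.trans er.symm) := by
        ext i j
        simp only [Matrix.submatrix_apply, id_eq, Equiv.trans_apply, Equiv.apply_symm_apply]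
        rfl
      rw [hM, Matrix.det_permute', Matrix.det_submatrix_equiv_self] at hdet'
      intro h0
      exact hdet' (by rw [h0, mul_zero])
    obtain ⟨g, hgiso, hg⟩ := witt_general h2 B' hs' hnd' v w
      (fun i j => by rw [← hB'B, ← hB'B]; exact hvw i j) hdetG
    exact ⟨g, fun x y => by rw [hB'B, hB'B]; exact hgiso x y, fun i => (hg i).symm⟩
  · -- CASE B : m ≤ n
    have hmin : min n m = m := min_eq_right hmn
    let e : Fin m ≃ Fin (min n m) := finCongr hmin.symm
    let rows' : Fin m → Fin n := fun i => rows (e i)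
    let cols' : Fin m → Fin n := fun i => cols (e i)
    have hdetB' : (Matrix.of fun (i : Fin (min n m)) (j : Fin (min n m)) =>
        B' (v (rows i)) (v (cols j))).det ≠ 0 := by
      have heq : (Matrix.of fun (i : Fin (min n m)) (j : Fin (min n m)) =>
          B' (v (rows i)) (v (cols j))) = (Matrix.of fun i j => B (v (rows i)) (v (cols j))) := by
        ext i j; rw [Matrix.of_apply, Matrix.of_apply, hB'B]
      rw [heq]; exact hdet
    have hdet' : (Matrix.of fun i j => B' (v (rows' i)) (v (cols' j))).det ≠ 0 := by
      have heq : (Matrix.of fun i j => B' (v (rows' i)) (v (cols' j)))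
          = (Matrix.of fun (i : Fin (min n m)) (j : Fin (min n m)) =>
            B' (v (rows i)) (v (cols j))).submatrix e e := rfl
      rw [heq, Matrix.det_submatrix_equiv_self]
      exact hdetB'
    set X : Matrix (Fin m) (Fin m) K := Matrix.of fun i k => v (rows' i) k with hX
    have hB'mat : ∀ (x y : Fin m → K), B' x y
        = ∑ k, x k * a k * y k := by
      intro x y
      simp only [hB'def, LinearMap.mk₂_apply]
      exact Finset.sum_congr rfl fun k _ => by ring
    have hfact : (Matrix.of fun i j => B' (v (rows' i)) (v (cols' j)))
        = X * (Matrix.diagonal a) * (Matrix.of fun j k => v (cols' j) k).transpose := by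
      ext i j
      rw [Matrix.mul_apply, Matrix.of_apply, hB'mat]
      refine Finset.sum_congr rfl fun k _ => ?_
      rw [Matrix.mul_diagonal, Matrix.transpose_apply]
      simp [hX]
    have hdetX : X.det ≠ 0 := by
      intro h0
      apply hdet'
      rw [hfact, Matrix.det_mul, Matrix.det_mul, h0, zero_mul, zero_mul]
    have hfactG : (Matrix.of fun i j => B' (v (rows' i)) (v (rows' j)))
        = X * (Matrix.diagonal a) * X.transpose := by
      ext i j
      rw [Matrix.mul_apply, Matrix.of_apply, hB'mat]
      refine Finset.sum_congr rfl fun k _ => ?_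
      rw [Matrix.mul_diagonal, Matrix.transpose_apply]
      simp [hX]
    have hdetD : (Matrix.diagonal a).det ≠ 0 := by
      rw [Matrix.det_diagonal]
      exact Finset.prod_ne_zero_iff.mpr fun k _ => ha k
    have hdetGu : (Matrix.of fun i j => B' (v (rows' i)) (v (rows' j))).det ≠ 0 := by
      rw [hfactG, Matrix.det_mul, Matrix.det_mul, Matrix.det_transpose]
      exact mul_ne_zero (mul_ne_zero hdetX hdetD) hdetX
    obtain ⟨g, hgiso, hgu⟩ := witt_general h2 B' hs' hnd'
      (fun j => v (rows' j)) (fun j => w (rows' j))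
      (fun i j => by rw [← hB'B, ← hB'B]; exact hvw _ _) hdetGu
    have hliu : LinearIndependent K (fun j => v (rows' j)) := gram_li B' _ hdetGu
    have hGw : (Matrix.of fun i j => B' (w (rows' i)) (w (rows' j)))
        = (Matrix.of fun i j => B' (v (rows' i)) (v (rows' j))) := by
      ext i j
      rw [Matrix.of_apply, Matrix.of_apply, ← hB'B, ← hB'B, hvw]
    have hliw : LinearIndependent K (fun j => w (rows' j)) := by
      apply gram_li B'
      rw [hGw]
      exact hdetGu
    haveI : Nonempty (Fin m) := ⟨⟨0, hmpos⟩⟩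
    have hcard : Fintype.card (Fin m) = finrank K (Fin m → K) := by
      simp [Module.finrank_fin_fun]
    let bu := basisOfLinearIndependentOfCardEqFinrank hliu hcard
    have hbu : ∀ j, bu j = v (rows' j) := fun j => by
      rw [show ⇑bu = fun j => v (rows' j) from
        coe_basisOfLinearIndependentOfCardEqFinrank hliu hcard]
    have hspanw : Submodule.span K (Set.range fun j => w (rows' j)) = ⊤ :=
      hliw.span_eq_top_of_card_eq_finrank hcard
    refine ⟨g, fun x y => by rw [hB'B, hB'B]; exact hgiso x y, ?_⟩
    intro i
    set c : Fin m → K := fun j => bu.repr (v i) j with hc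
    have hvi : v i = ∑ j, c j • v (rows' j) := by
      conv_lhs => rw [← bu.sum_repr (v i)]
      exact Finset.sum_congr rfl fun j _ => by rw [hbu]
    have hwi : w i = ∑ j, c j • w (rows' j) := by
      rw [← sub_eq_zero]
      apply (LinearMap.IsRefl.nondegenerate_iff_separatingLeft hs'.isRefl).mp hnd'
      intro y
      have hy : y ∈ Submodule.span K (Set.range fun j => w (rows' j)) := by
        rw [hspanw]; trivial
      induction hy using Submodule.span_induction with
      | mem z hz =>
        obtain ⟨k, rfl⟩ := hz
        rw [map_sub, LinearMap.sub_apply, bilin_sum_left']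
        have h1 : B' (w i) (w (rows' k)) = B' (v i) (v (rows' k)) := by
          rw [← hB'B, ← hB'B, hvw]
        have h3 : ∑ j, c j * B' (w (rows' j)) (w (rows' k))
            = ∑ j, c j * B' (v (rows' j)) (v (rows' k)) := by
          refine Finset.sum_congr rfl fun j _ => ?_
          rw [← hB'B, ← hB'B, hvw]
        rw [h1, h3, ← bilin_sum_left', ← hvi, sub_self]
      | zero => simp
      | add y1 y2 _ _ hy1 hy2 => rw [map_add, hy1, hy2, add_zero]
      | smul t y1 _ hy1 => rw [map_smul, hy1, smul_zero]
    rw [hwi, hvi, map_sum]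
    exact Finset.sum_congr rfl fun j _ => by rw [map_smul, hgu j]
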